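/- Let {H_1, ..., H_t} be a complete Hall σ-set of a finite group G where each H_i is a σ_i-group, let H be a p-subgroup of G that is σ-semipermutable with respect to {H_1,...,H_t}, where p ∈ π(H_1) ⊆ σ_1. If R is a normal σ_1-subgroup of G, then the index |G : N_G(H ∩ R)| is a σ_1-number (divisible only by primes in σ_1). -/

import Mathlib

open Subgroup Pointwise

variable {G : Type*}

/-- The conjugate subgroup `K ^ x = x⁻¹ K x`. -/
def sconj [Group G] (x : G) (K : Subgroup G) : Subgroup G :=
  K.map (MulAut.conj x⁻¹).toMonoidHom

/-- Two subgroups permute if `AB = BA` as subsets. -/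
def permutes [Group G] (A B : Subgroup G) : Prop :=
  (A : Set G) * (B : Set G) = (B : Set G) * (A : Set G)

/-- `H/K` is a chief factor of `G`. -/
def IsChiefFactor [Group G] (K H : Subgroup G) : Prop :=
  K.Normal ∧ H.Normal ∧ K < H ∧ ∀ N : Subgroup G, N.Normal → K < N → N ≤ H → N = H

/-- The factor `H/K` is cyclic (generated by a single coset). -/
def CyclicFactor [Group G] (K H : Subgroup G) : Prop :=
  ∃ g ∈ H, ∀ h ∈ H, ∃ n : ℤ, (g ^ n)⁻¹ * h ∈ K

/-- A group is `p`-soluble if every chief factor is a `p`-group or a `p'`-group. -/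
def pSoluble (p : ℕ) (X : Type*) [Group X] : Prop :=
  ∀ K H : Subgroup X, IsChiefFactor K H →
    (∃ n : ℕ, (K.subgroupOf H).index = p ^ n) ∨ ¬ p ∣ (K.subgroupOf H).index

/-- `p`-supersoluble: `p`-soluble and chief factors of order divisible by `p` have order `p`. -/
def pSupersoluble (p : ℕ) (X : Type*) [Group X] : Prop :=
  pSoluble p X ∧ ∀ K H : Subgroup X, IsChiefFactor K H →
    p ∣ (K.subgroupOf H).index → (K.subgroupOf H).index = p

/-- A Hall `s`-subgroup: its order involves only primes in `s`, its index none. -/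
def IsHallSigmaSubgroup {X : Type*} [Group X] (s : Set ℕ) (H : Subgroup X) : Prop :=
  (∀ q : ℕ, q.Prime → q ∣ Nat.card H → q ∈ s) ∧
    ∀ q : ℕ, q.Prime → q ∣ H.index → q ∉ s

/-- `σ` is a partition of the set of all primes. -/
def IsPrimePartition {ι : Type*} (σ : ι → Set ℕ) : Prop :=
  (∀ i, ∀ q ∈ σ i, Nat.Prime q) ∧ ∀ q : ℕ, q.Prime → ∃! i, q ∈ σ i

/-- `ℋ` (with labelling `j`) is a complete Hall `σ`-set. -/
def IsCompleteHallSigmaSet {X : Type*} [Group X] {ι : Type*} (σ : ι → Set ℕ)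
    {t : ℕ} (ℋ : Fin t → Subgroup X) (j : Fin t → ι) : Prop :=
  Function.Injective j ∧ (∀ i, IsHallSigmaSubgroup (σ (j i)) (ℋ i)) ∧
    ∀ a : ι, (∃ q : ℕ, q.Prime ∧ q ∈ σ a ∧ q ∣ Nat.card X) → ∃ i, j i = a

/-- `H` is σ-semipermutable with respect to `ℋ`. -/
def SigmaSemipermutable {X : Type*} [Group X] {t : ℕ} (H : Subgroup X)
    (ℋ : Fin t → Subgroup X) : Prop :=
  ∀ i : Fin t, Nat.Coprime (Nat.card H) (Nat.card (ℋ i)) →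
    ∀ x : X, permutes H (sconj x (ℋ i))

/-- `E/O ≤ Z_∞(G/O)`: there is an ascending chain from `O` which is central over `O`
and covers `E`. -/
def LeHypercenterOver [Group G] (O E : Subgroup G) : Prop :=
  ∃ n : ℕ, ∃ Z : ℕ → Subgroup G, Z 0 = O ∧ E ≤ Z n ∧
    ∀ i < n, Z i ≤ Z (i + 1) ∧ ∀ z ∈ Z (i + 1), ∀ g : G, z * g * z⁻¹ * g⁻¹ ∈ Z i

/-- `p`-nilpotent: has a normal `p`-complement. -/
def pNilpotent (p : ℕ) (X : Type*) [Group X] : Prop :=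
  ∃ N : Subgroup X, N.Normal ∧ ¬ p ∣ Nat.card N ∧
    ∀ q : ℕ, q.Prime → q ∣ N.index → q = p

/-- `O_{p'}(E)`, the largest normal `p'`-subgroup of `E`, as a subgroup of `G`. -/
def OpPrime (p : ℕ) [Group G] (E : Subgroup G) : Subgroup G :=
  ⨆ N ∈ {N : Subgroup G | N ≤ E ∧ (N.subgroupOf E).Normal ∧ ¬ p ∣ Nat.card N}, N

/-- `O_π(X)`, the largest normal `π`-subgroup. -/
def Oset (π : Set ℕ) (X : Type*) [Group X] : Subgroup X :=
  ⨆ N ∈ {N : Subgroup X | N.Normal ∧ ∀ q : ℕ, q.Prime → q ∣ Nat.card N → q ∈ π}, N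

/-- The Fitting subgroup: join of all normal nilpotent subgroups. -/
def FittingSub (X : Type*) [Group X] : Subgroup X :=
  ⨆ N ∈ {N : Subgroup X | N.Normal ∧ Group.IsNilpotent N}, N

/-- `G/C` is strictly `p`-closed (stated internally in `G`, over the subgroup `C`). -/
def StrictlyPClosedOver [Group G] (p : ℕ) (C : Subgroup G) : Prop :=
  ∃ S : Subgroup G, C ≤ S ∧ S.Normal ∧ (∀ s ∈ S, ∃ n : ℕ, s ^ p ^ n ∈ C) ∧
    ¬ p ∣ S.index ∧ (∀ a b : G, a * b * a⁻¹ * b⁻¹ ∈ S) ∧ ∀ a : G, a ^ (p - 1) ∈ S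


lemma sconj_one [Group G] (K : Subgroup G) : sconj (1 : G) K = K := by
  ext g
  simp [sconj, Subgroup.mem_map, MulAut.conj]

/-- Key lemma: each Hall subgroup `ℋ i` with `i ≠ i1` normalizes `H ⊓ R`. -/
lemma key_norm {ι : Type*} [Group G] [Finite G] (p : ℕ) (hp : p.Prime)
    (σ : ι → Set ℕ) (hσ : IsPrimePartition σ)
    {t : ℕ} (ℋ : Fin t → Subgroup G) (j : Fin t → ι)
    (hH : IsCompleteHallSigmaSet σ ℋ j)
    (H : Subgroup G) (hHp : IsPGroup p H)
    (hs : SigmaSemipermutable H ℋ)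
    (i1 : Fin t) (hp1 : p ∈ σ (j i1))
    (R : Subgroup G) (hRn : R.Normal)
    (hR : ∀ q : ℕ, q.Prime → q ∣ Nat.card R → q ∈ σ (j i1))
    (i : Fin t) (hne : i ≠ i1) :
    ℋ i ≤ Subgroup.normalizer ((H ⊓ R : Subgroup G) : Set G) := by
  haveI : Fact p.Prime := ⟨hp⟩
  set A := ℋ i with hA
  -- p does not divide |A|
  have hpA : ¬ p ∣ Nat.card A := by
    intro hd
    have h1 : p ∈ σ (j i) := (hH.2.1 i).1 p hp hd
    obtain ⟨a, -, ha⟩ := hσ.2 p hp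
    exact hne (hH.1 ((ha _ h1).trans (ha _ hp1).symm))
  obtain ⟨k, hk⟩ := (IsPGroup.iff_card (p := p)).mp hHp
  have hcop : Nat.Coprime (Nat.card H) (Nat.card A) := by
    rw [hk]
    exact Nat.Coprime.pow_left k ((Nat.Prime.coprime_iff_not_dvd hp).mpr hpA)
  have hperm : (H : Set G) * (A : Set G) = (A : Set G) * (H : Set G) := by
    have h := hs i hcop 1
    rwa [sconj_one] at h
  -- the product HA is a subgroup
  let K : Subgroup G :=
    { carrier := (H : Set G) * (A : Set G)
      one_mem' := ⟨1, H.one_mem, 1, A.one_mem, one_mul 1⟩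
      mul_mem' := by
        rintro x y ⟨h1, hh1, a1, ha1, rfl⟩ ⟨h2, hh2, a2, ha2, rfl⟩
        have hmem : a1 * h2 ∈ (H : Set G) * (A : Set G) := by
          rw [hperm]; exact ⟨a1, ha1, h2, hh2, rfl⟩
        obtain ⟨h3, hh3, a3, ha3, he⟩ := hmem
        refine ⟨h1 * h3, H.mul_mem hh1 hh3, a3 * a2, A.mul_mem ha3 ha2, ?_⟩
        have he' : h3 * a3 = a1 * h2 := he
        show h1 * h3 * (a3 * a2) = (h1 * a1) * (h2 * a2)
        have h4 : h1 * h3 * (a3 * a2) = h1 * (h3 * a3) * a2 := by group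
        rw [h4, he']; group
      inv_mem' := by
        rintro x ⟨h, hh, a, ha, rfl⟩
        have hmem : a⁻¹ * h⁻¹ ∈ (H : Set G) * (A : Set G) := by
          rw [hperm]; exact ⟨a⁻¹, A.inv_mem ha, h⁻¹, H.inv_mem hh, rfl⟩
        simpa [mul_inv_rev] using hmem }
  have hHK : H ≤ K := fun h hh => ⟨h, hh, 1, A.one_mem, mul_one h⟩
  have hAK : A ≤ K := fun a ha => ⟨1, H.one_mem, a, ha, one_mul a⟩
  have hbot : H ⊓ A = ⊥ := by
    rw [← Subgroup.card_eq_one]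
    refine Nat.dvd_one.mp ?_
    have := Nat.dvd_gcd (Subgroup.card_dvd_of_le (inf_le_left : H ⊓ A ≤ H))
      (Subgroup.card_dvd_of_le (inf_le_right : H ⊓ A ≤ A))
    rwa [Nat.Coprime.gcd_eq_one hcop] at this
  -- |K| = |H| * |A|
  have hcardK : Nat.card K = Nat.card H * Nat.card A := by
    have hbij : Function.Bijective
        (fun x : H × A => (⟨(x.1 : G) * (x.2 : G),
          ⟨x.1, x.1.2, x.2, x.2.2, rfl⟩⟩ : K)) := by
      constructor
      · rintro ⟨⟨h1, hh1⟩, ⟨a1, ha1⟩⟩ ⟨⟨h2, hh2⟩, ⟨a2, ha2⟩⟩ heq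
        have heq' : h1 * a1 = h2 * a2 := congrArg Subtype.val heq
        have hz : h2⁻¹ * h1 = a2 * a1⁻¹ := by
          calc h2⁻¹ * h1 = h2⁻¹ * (h1 * a1) * a1⁻¹ := by group
            _ = h2⁻¹ * (h2 * a2) * a1⁻¹ := by rw [heq']
            _ = a2 * a1⁻¹ := by group
        have hzH : h2⁻¹ * h1 ∈ H ⊓ A := by
          refine ⟨H.mul_mem (H.inv_mem hh2) hh1, ?_⟩
          rw [hz]; exact A.mul_mem ha2 (A.inv_mem ha1)
        rw [hbot] at hzH
        have h12 : h1 = h2 := by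
          have : h2⁻¹ * h1 = 1 := hzH
          rw [inv_mul_eq_one] at this; exact this.symm
        have ha12 : a1 = a2 := by
          have h1' : a2 * a1⁻¹ = 1 := by rw [← hz]; exact hzH
          rw [mul_inv_eq_one] at h1'; exact h1'.symm
        simp [Prod.ext_iff, Subtype.ext_iff, h12, ha12]
      · rintro ⟨x, h1, hh1, a1, ha1, rfl⟩
        exact ⟨(⟨h1, hh1⟩, ⟨a1, ha1⟩), rfl⟩
    calc Nat.card K = Nat.card (H × A) := (Nat.card_eq_of_bijective _ hbij).symm
      _ = Nat.card H * Nat.card A := Nat.card_prod _ _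
  -- index of H in K is |A|
  have hcardH' : Nat.card (H.subgroupOf K) = Nat.card H :=
    Nat.card_congr (Subgroup.subgroupOfEquivOfLe hHK).toEquiv
  have hidx : (H.subgroupOf K).index = Nat.card A := by
    have h1 : Nat.card (H.subgroupOf K) * (H.subgroupOf K).index = Nat.card K :=
      Subgroup.card_mul_index _
    rw [hcardH', hcardK] at h1
    exact Nat.eq_of_mul_eq_mul_left Nat.card_pos h1
  have hH' : IsPGroup p (H.subgroupOf K) :=
    hHp.of_equiv (Subgroup.subgroupOfEquivOfLe hHK).symm
  -- K ⊓ R gives a normal p-subgroup of K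
  have hcardQ : Nat.card ((K ⊓ R).subgroupOf K) = Nat.card (K ⊓ R : Subgroup G) :=
    Nat.card_congr (Subgroup.subgroupOfEquivOfLe inf_le_left).toEquiv
  have hQn : ((K ⊓ R).subgroupOf K).Normal := by
    rw [Subgroup.inf_subgroupOf_left]
    exact hRn.subgroupOf K
  have hQp : IsPGroup p ((K ⊓ R).subgroupOf K) := by
    rw [IsPGroup.iff_card]
    refine ⟨(Nat.card (K ⊓ R : Subgroup G)).primeFactorsList.length, ?_⟩
    rw [hcardQ]
    refine Nat.eq_prime_pow_of_unique_prime_dvd Nat.card_pos.ne' ?_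
    intro d hd hddvd
    have hdR : d ∣ Nat.card R := hddvd.trans (Subgroup.card_dvd_of_le inf_le_right)
    have hd1 : d ∈ σ (j i1) := hR d hd hdR
    have hdK : d ∣ Nat.card H * Nat.card A := by
      rw [← hcardK]; exact hddvd.trans (Subgroup.card_dvd_of_le inf_le_left)
    rcases (Nat.Prime.dvd_mul hd).mp hdK with hdH | hdA
    · rw [hk] at hdH
      exact (Nat.prime_dvd_prime_iff_eq hd hp).mp (hd.dvd_of_dvd_pow hdH)
    · exfalso
      have hdi : d ∈ σ (j i) := (hH.2.1 i).1 d hd hdA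
      obtain ⟨a, -, ha⟩ := hσ.2 d hd
      exact hne (hH.1 ((ha _ hdi).trans (ha _ hd1).symm))
  -- (K ⊓ R) ≤ H
  haveI := hQn
  have hS : IsPGroup p ((H.subgroupOf K) ⊔ ((K ⊓ R).subgroupOf K) : Subgroup K) :=
    IsPGroup.to_sup_of_normal_right hH' hQp
  obtain ⟨m, hm⟩ := (IsPGroup.iff_card (p := p)).mp hS
  have hrel1 : (H.subgroupOf K).relIndex ((H.subgroupOf K) ⊔ ((K ⊓ R).subgroupOf K)) = 1 := by
    have hd1 : (H.subgroupOf K).relIndex _ ∣ (H.subgroupOf K).index :=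
      ⟨_, (Subgroup.relIndex_mul_index
        (le_sup_left : H.subgroupOf K ≤ (H.subgroupOf K) ⊔ ((K ⊓ R).subgroupOf K))).symm⟩
    rw [hidx] at hd1
    have hd2 : (H.subgroupOf K).relIndex ((H.subgroupOf K) ⊔ ((K ⊓ R).subgroupOf K)) ∣ p ^ m := by
      rw [← hm]; exact Subgroup.index_dvd_card _
    obtain ⟨e, he, hrel⟩ := (Nat.dvd_prime_pow hp).mp hd2
    rcases Nat.eq_zero_or_pos e with rfl | hepos
    · simpa using hrel
    · exfalso
      apply hpA
      refine dvd_trans ?_ hd1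
      rw [hrel]
      exact dvd_pow_self p hepos.ne'
  have hQH : (K ⊓ R).subgroupOf K ≤ H.subgroupOf K :=
    le_trans le_sup_right (Subgroup.relIndex_eq_one.mp hrel1)
  have hKRH : K ⊓ R ≤ H := by
    intro x hx
    have hxK : x ∈ K := hx.1
    have : (⟨x, hxK⟩ : K) ∈ (K ⊓ R).subgroupOf K := Subgroup.mem_subgroupOf.mpr hx
    exact Subgroup.mem_subgroupOf.mp (hQH this)
  have hKR : K ⊓ R = H ⊓ R := le_antisymm (le_inf hKRH inf_le_right)
    (inf_le_inf_right R hHK)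
  -- conclude: elements of A normalize K ⊓ R = H ⊓ R
  intro g hg
  rw [← hKR, Subgroup.mem_normalizer_iff]
  intro n
  constructor
  · intro hn
    exact ⟨K.mul_mem (K.mul_mem (hAK hg) hn.1) (K.inv_mem (hAK hg)),
      hRn.conj_mem n hn.2 g⟩
  · intro hn
    have hKmem : g⁻¹ * (g * n * g⁻¹) * g ∈ K :=
      K.mul_mem (K.mul_mem (K.inv_mem (hAK hg)) hn.1) (hAK hg)
    have hRmem : g⁻¹ * (g * n * g⁻¹) * (g⁻¹)⁻¹ ∈ R := hRn.conj_mem _ hn.2 g⁻¹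
    have heq : g⁻¹ * (g * n * g⁻¹) * g = n := by group
    constructor
    · rwa [heq] at hKmem
    · rw [inv_inv, heq] at hRmem; exact hRmem

/-- Let `{H_1,...,H_t}` be a complete Hall σ-set of `G`, `H` a
σ-semipermutable `p`-subgroup with `p ∈ π(H_{i₁}) ⊆ σ_{j i₁}`, and `R` a normal
`σ_{j i₁}`-subgroup of `G`. Then `|G : N_G(H ⊓ R)|` is a `σ_{j i₁}`-number. -/
theorem stmt13 {ι : Type*} [Group G] [Finite G] (p : ℕ) (hp : p.Prime)
    (σ : ι → Set ℕ) (hσ : IsPrimePartition σ)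
    {t : ℕ} (ℋ : Fin t → Subgroup G) (j : Fin t → ι)
    (hH : IsCompleteHallSigmaSet σ ℋ j)
    (H : Subgroup G) (hHp : IsPGroup p H)
    (hs : SigmaSemipermutable H ℋ)
    (i1 : Fin t) (hp1 : p ∈ σ (j i1)) (hdvd : p ∣ Nat.card (ℋ i1))
    (R : Subgroup G) (hRn : R.Normal)
    (hR : ∀ q : ℕ, q.Prime → q ∣ Nat.card R → q ∈ σ (j i1)) :
    ∀ q : ℕ, q.Prime → q ∣ (Subgroup.normalizer ((H ⊓ R : Subgroup G) : Set G)).index → q ∈ σ (j i1) := by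
  intro q hq hqdvd
  by_contra hqn
  have hqG : q ∣ Nat.card G := hqdvd.trans (Subgroup.index_dvd_card _)
  obtain ⟨a, haq, ha⟩ := hσ.2 q hq
  obtain ⟨i, hi⟩ := hH.2.2 a ⟨q, hq, haq, hqG⟩
  have hne : i ≠ i1 := by
    rintro rfl
    exact hqn (hi ▸ haq)
  have hle := key_norm p hp σ hσ ℋ j hH H hHp hs i1 hp1 R hRn hR i hne
  have hqi : q ∣ (ℋ i).index := hqdvd.trans (Subgroup.index_dvd_of_le hle)
  exact absurd (hi ▸ haq) ((hH.2.1 i).2 q hq hqi)
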